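/- Let ψ ∈ Ω be such that for every α > 1 the limit A_ψ(α) := lim_{t→∞} ψ(t^α)/ψ(t) exists and is finite. Then for every α > 0 the limit A_ψ(α) := lim_{t→∞} ψ(t^α)/ψ(t) exists and equals α^{log A_ψ(e)}; in particular, A_ψ(αβ) = A_ψ(α)·A_ψ(β) for all α, β > 0 and lim_{α→1⁺} A_ψ(α) = 1. -/

import Mathlib

open Filter Set Topology

lemma linear_of_additive_monotone (f : ℝ → ℝ)
    (hadd : ∀ x y : ℝ, f (x + y) = f x + f y) (hmono : Monotone f) :
    ∀ x : ℝ, f x = f 1 * x := by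
  set F : ℝ →+ ℝ := AddMonoidHom.mk' f hadd with hF
  have hq : ∀ q : ℚ, f (q : ℝ) = f 1 * q := by
    intro q
    have : F ((q : ℝ)) = F (q • (1 : ℝ)) := by norm_num
    have h2 : F (q • (1:ℝ)) = q • F 1 := map_ratCast_smul F ℚ ℚ q 1
    simpa [hF, Rat.smul_def, mul_comm] using this.trans h2
  have hk0 : 0 ≤ f 1 := by
    have h00 : f 0 = 0 := by have := hadd 0 0; simp at this; linarith
    have := hmono (zero_le_one (α := ℝ)); linarith
  intro x
  set k := f 1 with hk
  have hub : ∀ q : ℚ, x ≤ (q:ℝ) → f x ≤ k * q := by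
    intro q h; calc f x ≤ f q := hmono h
      _ = k * q := hq q
  have hlb : ∀ q : ℚ, (q:ℝ) ≤ x → k * q ≤ f x := by
    intro q h; calc (k * q : ℝ) = f q := (hq q).symm
      _ ≤ f x := hmono h
  have h1 : f x ≤ k * x := by
    refine le_of_forall_pos_le_add ?_
    intro ε hε
    obtain ⟨q, hq1, hq2⟩ := exists_rat_btwn (show x < x + ε / (k + 1) by
      have : 0 < ε / (k+1) := by positivity
      linarith)
    have h3 := hub q hq1.le
    have h4 : k * q ≤ k * (x + ε / (k+1)) :=
      mul_le_mul_of_nonneg_left hq2.le hk0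
    have h5 : k * (x + ε / (k+1)) ≤ k * x + ε := by
      have : k * (ε / (k+1)) ≤ ε := by
        rw [mul_div_assoc', div_le_iff₀ (by positivity)]
        nlinarith
      nlinarith
    linarith
  have h2 : k * x ≤ f x := by
    by_contra h
    push_neg at h
    rcases eq_or_lt_of_le hk0 with hk1 | hk1
    · obtain ⟨q, hq1, hq2⟩ := exists_rat_btwn (show x - 1 < x by linarith)
      have h3 := hlb q hq2.le
      rw [← hk1] at h h3
      simp at h3
      linarith
    · set δ := (k * x - f x) / (k + 1) with hδ
      have hδpos : 0 < δ := div_pos (by linarith) (by linarith)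
      obtain ⟨q, hq1, hq2⟩ := exists_rat_btwn (show x - δ < x by linarith)
      have h3 := hlb q hq2.le
      have h4 : k * (x - δ) ≤ k * q := mul_le_mul_of_nonneg_left hq1.le hk0
      have h5 : k * δ < k * x - f x := by
        rw [hδ, mul_div_assoc', div_lt_iff₀ (by linarith)]
        nlinarith
      nlinarith
  linarith

/-- If `ψ ∈ Ω` and for every `α > 1` the limit
`A_ψ(α) = lim_{t→∞} ψ(t^α)/ψ(t)` exists (finite), then the limit exists for all `α > 0`,
equals `α ^ log (A_ψ e)`, is multiplicative, and `A_ψ(α) → 1` as `α → 1⁺`. -/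
theorem stmt1
    (ψ : ℝ → ℝ)
    (hmono : MonotoneOn ψ (Set.Ici 0))
    (hconc : ConcaveOn ℝ (Set.Ici 0) ψ)
    (hzero : ψ 0 = 0)
    (hnonneg : ∀ t ≥ (0:ℝ), 0 ≤ ψ t)
    (htop : Tendsto ψ atTop atTop)
    (hlim : ∀ α > (1:ℝ), ∃ L : ℝ, Tendsto (fun t => ψ (t ^ α) / ψ t) atTop (𝓝 L)) :
    ∃ A : ℝ → ℝ,
      (∀ α > (0:ℝ), Tendsto (fun t => ψ (t ^ α) / ψ t) atTop (𝓝 (A α))) ∧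
      (∀ α > (0:ℝ), A α = α ^ Real.log (A (Real.exp 1))) ∧
      (∀ α > (0:ℝ), ∀ β > (0:ℝ), A (α * β) = A α * A β) ∧
      Tendsto A (𝓝[>] 1) (𝓝 1) := by
  classical
  have hψ1 : ∀ᶠ t in atTop, 1 ≤ ψ t := htop.eventually_ge_atTop 1
  set F : ℝ → ℝ := fun α => if h : 1 < α then (hlim α h).choose else 0 with hFdef
  have hF : ∀ α, 1 < α → Tendsto (fun t => ψ (t ^ α) / ψ t) atTop (𝓝 (F α)) := by
    intro α hα
    simp only [hFdef, dif_pos hα]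
    exact (hlim α hα).choose_spec
  -- F ≥ 1 on (1, ∞)
  have hF1 : ∀ α, 1 < α → 1 ≤ F α := by
    intro α hα
    refine ge_of_tendsto (hF α hα) ?_
    filter_upwards [hψ1, eventually_ge_atTop (1:ℝ)] with t h1 h2
    have h0 : (0:ℝ) ≤ t := by linarith
    have htα : t ≤ t ^ α := by
      calc t = t ^ (1:ℝ) := (Real.rpow_one t).symm
        _ ≤ t ^ α := Real.rpow_le_rpow_of_exponent_le h2 hα.le
    have hmle : ψ t ≤ ψ (t ^ α) :=
      hmono (mem_Ici.mpr h0) (mem_Ici.mpr (Real.rpow_nonneg h0 α)) htα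
    rw [le_div_iff₀ (by linarith)]
    linarith
  -- F multiplicative on (1, ∞)
  have hFmul : ∀ α, 1 < α → ∀ β, 1 < β → F (α * β) = F α * F β := by
    intro α hα β hβ
    have hαβ : 1 < α * β := by nlinarith
    refine tendsto_nhds_unique (hF _ hαβ) ?_
    have h1 : Tendsto (fun t => ψ ((t ^ β) ^ α) / ψ (t ^ β)) atTop (𝓝 (F α)) :=
      (hF α hα).comp (tendsto_rpow_atTop (by linarith))
    have h2 := h1.mul (hF β hβ)
    refine h2.congr' ?_
    have hψβ : ∀ᶠ t in atTop, 1 ≤ ψ (t ^ β) :=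
      (tendsto_rpow_atTop (by linarith : (0:ℝ) < β)).eventually hψ1
    filter_upwards [hψβ, eventually_ge_atTop (0:ℝ)] with t h1' h2'
    have hrw : (t ^ β) ^ α = t ^ (α * β) := by
      rw [mul_comm, Real.rpow_mul h2']
    rw [hrw]
    field_simp
  -- F monotone on (1, ∞)
  have hFmono : ∀ α β, 1 < α → α ≤ β → F α ≤ F β := by
    intro α β hα hαβ
    refine le_of_tendsto_of_tendsto (hF α hα) (hF β (lt_of_lt_of_le hα hαβ)) ?_
    filter_upwards [hψ1, eventually_ge_atTop (1:ℝ)] with t h1 h2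
    have h0 : (0:ℝ) ≤ t := by linarith
    have hle : t ^ α ≤ t ^ β := Real.rpow_le_rpow_of_exponent_le h2 hαβ
    have hm := hmono (mem_Ici.mpr (Real.rpow_nonneg h0 α))
      (mem_Ici.mpr (Real.rpow_nonneg h0 β)) hle
    exact div_le_div_of_nonneg_right hm (by linarith)
  -- the exponent k
  have hexp1 : (1:ℝ) < Real.exp 1 := by nlinarith [Real.add_one_le_exp (1:ℝ)]
  set k := Real.log (F (Real.exp 1)) with hkdef
  have hk0 : 0 ≤ k := Real.log_nonneg (hF1 _ hexp1)
  -- additive function on positives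
  set c : ℝ → ℝ := fun x => Real.log (F (Real.exp x)) with hcdef
  have hcadd : ∀ x, 0 < x → ∀ y, 0 < y → c (x + y) = c x + c y := by
    intro x hx y hy
    have hx1 : 1 < Real.exp x := Real.one_lt_exp_iff.mpr hx
    have hy1 : 1 < Real.exp y := Real.one_lt_exp_iff.mpr hy
    have h1 : F (Real.exp x * Real.exp y) = F (Real.exp x) * F (Real.exp y) :=
      hFmul _ hx1 _ hy1
    simp only [hcdef, Real.exp_add, h1]
    exact Real.log_mul (by linarith [hF1 _ hx1]) (by linarith [hF1 _ hy1])
  have hcmono : ∀ x y, 0 < x → x ≤ y → c x ≤ c y := by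
    intro x y hx hxy
    have hx1 : (1:ℝ) < Real.exp x := Real.one_lt_exp_iff.mpr hx
    exact Real.log_le_log (by linarith [hF1 _ hx1])
      (hFmono _ _ hx1 (Real.exp_le_exp.mpr hxy))
  -- independence of the shift
  have hindep : ∀ x s t : ℝ, 0 < s → 0 < t → 0 < x + s → 0 < x + t →
      c (x + s) - c s = c (x + t) - c t := by
    intro x s t hs ht hxs hxt
    have h1 := hcadd (x + s) hxs t ht
    have h2 := hcadd (x + t) hxt s hs
    have he : x + s + t = x + t + s := by ring
    rw [he] at h1
    linarith
  set E : ℝ → ℝ := fun x => c (x + (|x| + 1)) - c (|x| + 1) with hEdef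
  have hEindep : ∀ x s : ℝ, 0 < s → 0 < x + s → E x = c (x + s) - c s := by
    intro x s hs hxs
    refine hindep x _ s (by positivity) hs ?_ hxs
    have := neg_abs_le x
    linarith
  have hEc : ∀ x : ℝ, 0 < x → E x = c x := by
    intro x hx
    rw [hEindep x x hx (by linarith)]
    rw [hcadd x hx x hx]
    ring
  have hEadd : ∀ x y : ℝ, E (x + y) = E x + E y := by
    intro x y
    set T := |x| + |y| + 1 with hT
    have hxa := neg_abs_le x
    have hya := neg_abs_le y
    have hTpos : 0 < T := by positivity
    have h1 : E (x + y) = c (x + y + T) - c T :=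
      hEindep _ T hTpos (by simp only [hT]; linarith [abs_nonneg x, abs_nonneg y, neg_abs_le x, neg_abs_le y])
    have h2 : E y = c (y + T) - c T := hEindep y T hTpos (by simp only [hT]; linarith [abs_nonneg x, abs_nonneg y, neg_abs_le x, neg_abs_le y])
    have h3 : E x = c (x + (y + T)) - c (y + T) :=
      hEindep x (y + T) (by simp only [hT]; linarith [abs_nonneg x, abs_nonneg y, neg_abs_le x, neg_abs_le y]) (by simp only [hT]; linarith [abs_nonneg x, abs_nonneg y, neg_abs_le x, neg_abs_le y])
    have he : x + (y + T) = x + y + T := by ring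
    rw [he] at h3
    linarith
  have hEmono : Monotone E := by
    intro x y hxy
    set T := |x| + |y| + 1 with hT
    have hxa := neg_abs_le x
    have hya := neg_abs_le y
    rw [hEindep x T (by positivity) (by simp only [hT]; linarith [abs_nonneg x, abs_nonneg y, neg_abs_le x, neg_abs_le y]),
        hEindep y T (by positivity) (by simp only [hT]; linarith [abs_nonneg x, abs_nonneg y, neg_abs_le x, neg_abs_le y])]
    have := hcmono (x + T) (y + T) (by simp only [hT]; linarith [abs_nonneg x, abs_nonneg y, neg_abs_le x, neg_abs_le y]) (by linarith)
    linarith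
  have hE1 : E 1 = k := by
    rw [hEc 1 one_pos]
  have hElin := linear_of_additive_monotone E hEadd hEmono
  -- F α = α ^ k for α > 1
  have hFval : ∀ α : ℝ, 1 < α → F α = α ^ k := by
    intro α hα
    have hα0 : (0:ℝ) < α := by linarith
    have hlogα : 0 < Real.log α := Real.log_pos hα
    have h1 : c (Real.log α) = k * Real.log α := by
      rw [← hEc _ hlogα, hElin, hE1]
    have h2 : Real.exp (Real.log α) = α := Real.exp_log hα0
    have h3 : Real.log (F α) = k * Real.log α := by
      have h4 := h1
      simp only [hcdef] at h4
      rw [h2] at h4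
      exact h4
    have hFpos : 0 < F α := lt_of_lt_of_le one_pos (hF1 α hα)
    rw [← Real.exp_log hFpos, h3, Real.rpow_def_of_pos hα0, mul_comm]
  refine ⟨fun α => α ^ k, ?_, ?_, ?_, ?_⟩
  · -- limits for all α > 0
    intro α hα
    show Tendsto (fun t => ψ (t ^ α) / ψ t) atTop (𝓝 (α ^ k))
    rcases lt_trichotomy α 1 with h | h | h
    · -- 0 < α < 1 : take reciprocals
      have hinv : 1 < 1/α := by rw [lt_div_iff₀ hα]; linarith
      have hcomp : Tendsto (fun t => ψ ((t ^ α) ^ (1/α)) / ψ (t ^ α)) atTop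
          (𝓝 (F (1/α))) := (hF _ hinv).comp (tendsto_rpow_atTop hα)
      have hne : F (1/α) ≠ 0 := by
        have := hF1 _ hinv; intro h0; rw [h0] at this; linarith
      have hinv2 := hcomp.inv₀ hne
      have heq : ∀ᶠ t in atTop,
          (ψ ((t ^ α) ^ (1/α)) / ψ (t ^ α))⁻¹ = ψ (t ^ α) / ψ t := by
        filter_upwards [eventually_ge_atTop (0:ℝ)] with t ht
        rw [inv_div]
        congr 2
        rw [← Real.rpow_mul ht, mul_one_div, div_self (by linarith : α ≠ 0),
          Real.rpow_one]
      have hfin := hinv2.congr' heq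
      have hval : (F (1/α))⁻¹ = α ^ k := by
        rw [hFval _ hinv, one_div, Real.inv_rpow hα.le, inv_inv]
      rwa [hval] at hfin
    · -- α = 1
      subst h
      rw [Real.one_rpow]
      refine Tendsto.congr' ?_ tendsto_const_nhds
      filter_upwards [hψ1] with t ht
      rw [Real.rpow_one, div_self (by linarith)]
    · rw [← hFval α h]; exact hF α h
  · -- value formula
    intro α hα
    show α ^ k = α ^ Real.log (Real.exp 1 ^ k)
    rw [Real.exp_one_rpow, Real.log_exp]
  · -- multiplicativity
    intro α hα β hβ
    show (α * β) ^ k = α ^ k * β ^ k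
    exact Real.mul_rpow hα.le hβ.le
  · -- limit at 1⁺
    have hc : Tendsto (fun x : ℝ => x ^ k) (𝓝 1) (𝓝 ((1:ℝ) ^ k)) :=
      (Real.continuousAt_rpow_const 1 k (Or.inl one_ne_zero)).tendsto
    rw [Real.one_rpow] at hc
    exact hc.mono_left nhdsWithin_le_nhds
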